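/- (Finiteness of the characteristic time.) Suppose ω is a probability vector on S × A with ω_{sa} > 0 for all (s,a), π(a|s) > 0 for all (s,a), ρ is a probability vector on S, and p is a transition kernel with V^π_p(ρ) ≠ 0. Then there exists ε > 0 such that every fully supported transition kernel q with V^π_q(ρ) · V^π_p(ρ) < 0 satisfies Σ_{s,a} ω_{sa} · KL_{sa}(p,q) ≥ ε. -/

import Mathlib

open Finset

noncomputable section

/-- `p` is a transition kernel: `p(·|s,a)` is a probability vector on `S`. -/
def IsKernel {S A : Type*} [Fintype S] (p : S → A → S → ℝ) : Prop :=
  (∀ s a s', 0 ≤ p s a s') ∧ ∀ s a, ∑ s' : S, p s a s' = 1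

/-- `π` is a policy: `π(·|s)` is a probability vector on `A`. -/
def IsPolicy {S A : Type*} [Fintype A] (π : S → A → ℝ) : Prop :=
  (∀ s a, 0 ≤ π s a) ∧ ∀ s, ∑ a : A, π s a = 1

/-- The row-stochastic matrix `P_{p,π}(s,s') = Σ_a π(a|s) p(s'|s,a)`. -/
def Pmat {S A : Type*} [Fintype A] (π : S → A → ℝ) (p : S → A → S → ℝ) :
    Matrix S S ℝ :=
  fun s s' => ∑ a : A, π s a * p s a s'

/-- `r^π(s) = Σ_a π(a|s) r(s,a)`. -/
def rpi {S A : Type*} [Fintype A] (π : S → A → ℝ) (r : S → A → ℝ) (s : S) : ℝ :=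
  ∑ a : A, π s a * r s a

/-- The value function `V^π_p(s) = Σ_t γ^t ((P_{p,π})^t r^π)(s)`. -/
def Vval {S A : Type*} [Fintype S] [DecidableEq S] [Fintype A]
    (γ : ℝ) (π : S → A → ℝ) (r : S → A → ℝ) (p : S → A → S → ℝ) (s : S) : ℝ :=
  ∑' t : ℕ, γ ^ t * ((Pmat π p ^ t).mulVec (fun s' => rpi π r s')) s

/-- The Q-function `Q^π_p(s,a) = r(s,a) + γ Σ_{s'} p(s'|s,a) V^π_p(s')`. -/
def Qval {S A : Type*} [Fintype S] [DecidableEq S] [Fintype A]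
    (γ : ℝ) (π : S → A → ℝ) (r : S → A → ℝ) (p : S → A → S → ℝ) (s : S) (a : A) : ℝ :=
  r s a + γ * ∑ s' : S, p s a s' * Vval γ π r p s'

/-- The matrix `M_{p,π}((s,a),(s',a')) = p(s'|s,a) π(a'|s')` on `S × A`. -/
def Mmat {S A : Type*} (π : S → A → ℝ) (p : S → A → S → ℝ) :
    Matrix (S × A) (S × A) ℝ :=
  fun sa s'a' => p sa.1 sa.2 s'a'.1 * π s'a'.1 s'a'.2

/-- The discounted visitation distribution
`d^π_{p,s,a}(s',a') = (1−γ) Σ_t γ^t ((M_{p,π})^t)_{(s,a),(s',a')}`. -/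
def dvis {S A : Type*} [Fintype S] [DecidableEq S] [Fintype A] [DecidableEq A]
    (γ : ℝ) (π : S → A → ℝ) (p : S → A → S → ℝ) (x y : S × A) : ℝ :=
  (1 - γ) * ∑' t : ℕ, γ ^ t * (Mmat π p ^ t) x y

/-- `d^π_{p,ρ}(s,a) = Σ_{(s₀,a₀)} ρ_{s₀} π(a₀|s₀) d^π_{p,s₀,a₀}(s,a)`. -/
def drho {S A : Type*} [Fintype S] [DecidableEq S] [Fintype A] [DecidableEq A]
    (γ : ℝ) (π : S → A → ℝ) (p : S → A → S → ℝ) (ρ : S → ℝ) (y : S × A) : ℝ :=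
  ∑ x : S × A, ρ x.1 * π x.1 x.2 * dvis γ π p x y

/-- `KL_{sa}(p,q) = Σ_{s'} p(s'|s,a) log(p(s'|s,a)/q(s'|s,a))`
(with the convention `0 log 0 = 0`, automatic since `Real.log 0 = 0`). -/
def KLsa {S A : Type*} [Fintype S] (p q : S → A → S → ℝ) (s : S) (a : A) : ℝ :=
  ∑ s' : S, p s a s' * Real.log (p s a s' / q s a s')

end

/-- Pointwise lower bound: `2x - 2√(xy) ≤ x log(x/y)`. -/
lemma aux_pointwise {x y : ℝ} (hx : 0 ≤ x) (hy : 0 < y) :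
    2*x - 2*Real.sqrt (x*y) ≤ x * Real.log (x/y) := by
  rcases eq_or_lt_of_le hx with h|h
  · simp [← h]
  · have ht : 0 < x / y := div_pos h hy
    have hs : 0 < Real.sqrt (x/y) := Real.sqrt_pos.2 ht
    have hsx : 0 < Real.sqrt x := Real.sqrt_pos.2 h
    have hlog : 2 * (1 - (Real.sqrt (x/y))⁻¹) ≤ Real.log (x/y) := by
      have h1 : Real.log ((Real.sqrt (x/y))⁻¹) ≤ (Real.sqrt (x/y))⁻¹ - 1 :=
        Real.log_le_sub_one_of_pos (by positivity)
      rw [Real.log_inv] at h1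
      have h2 : Real.log (Real.sqrt (x/y)) = Real.log (x/y) / 2 := Real.log_sqrt ht.le
      linarith
    have hxs : x * (Real.sqrt (x/y))⁻¹ = Real.sqrt (x*y) := by
      rw [Real.sqrt_div h.le, Real.sqrt_mul h.le, inv_div, mul_div_assoc']
      rw [div_eq_iff hsx.ne']
      have hx2 : Real.sqrt x * Real.sqrt x = x := Real.mul_self_sqrt h.le
      linear_combination (-(Real.sqrt y)) * hx2
    have key : x * (2 * (1 - (Real.sqrt (x/y))⁻¹)) ≤ x * Real.log (x/y) :=
      mul_le_mul_of_nonneg_left hlog hx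
    have e : x * (2 * (1 - (Real.sqrt (x/y))⁻¹)) = 2*x - 2*Real.sqrt (x*y) := by
      rw [← hxs]; ring
    linarith

/-- Weak Pinsker: `‖p - q‖₁² ≤ 4 KL(p,q)` for probability vectors. -/
lemma aux_pinsker {S : Type*} [Fintype S] (p q : S → ℝ)
    (hp0 : ∀ s, 0 ≤ p s) (hp1 : ∑ s, p s = 1)
    (hq0 : ∀ s, 0 < q s) (hq1 : ∑ s, q s = 1) :
    (∑ s, |p s - q s|)^2 ≤ 4 * ∑ s, p s * Real.log (p s / q s) := by
  set T := ∑ s, Real.sqrt (p s * q s) with hT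
  have hpt : ∀ s, (Real.sqrt (p s) - Real.sqrt (q s))^2
      = p s + q s - 2 * Real.sqrt (p s * q s) := by
    intro s
    rw [Real.sqrt_mul (hp0 s)]
    nlinarith [Real.sq_sqrt (hp0 s), Real.sq_sqrt (hq0 s).le]
  have hA : ∑ s, (Real.sqrt (p s) - Real.sqrt (q s))^2 = 2 - 2*T := by
    rw [Finset.sum_congr rfl (fun s _ => hpt s)]
    rw [Finset.sum_sub_distrib, Finset.sum_add_distrib, hp1, hq1, ← Finset.mul_sum, ← hT]
    ring
  have hKL : 2 - 2*T ≤ ∑ s, p s * Real.log (p s / q s) := by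
    have h1 : ∑ s, (2 * p s - 2*Real.sqrt (p s * q s)) ≤ ∑ s, p s * Real.log (p s / q s) :=
      Finset.sum_le_sum fun s _ => by
        have := aux_pointwise (hp0 s) (hq0 s); linarith
    have h2 : ∑ s, (2 * p s - 2*Real.sqrt (p s * q s)) = 2 - 2*T := by
      rw [Finset.sum_sub_distrib, ← Finset.mul_sum, ← Finset.mul_sum, hp1, ← hT]
      norm_num
    linarith
  have hL1 : ∑ s, |p s - q s|
      = ∑ s, |Real.sqrt (p s) - Real.sqrt (q s)| * (Real.sqrt (p s) + Real.sqrt (q s)) := by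
    refine Finset.sum_congr rfl fun s _ => ?_
    have e : p s - q s = (Real.sqrt (p s) - Real.sqrt (q s)) * (Real.sqrt (p s) + Real.sqrt (q s)) := by
      nlinarith [Real.sq_sqrt (hp0 s), Real.sq_sqrt (hq0 s).le]
    rw [e, abs_mul,
      abs_of_nonneg (show (0:ℝ) ≤ Real.sqrt (p s) + Real.sqrt (q s) by positivity)]
  have hCS := Finset.sum_mul_sq_le_sq_mul_sq Finset.univ
    (fun s => |Real.sqrt (p s) - Real.sqrt (q s)|) (fun s => Real.sqrt (p s) + Real.sqrt (q s))
  have hf : ∑ s, |Real.sqrt (p s) - Real.sqrt (q s)|^2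
      = ∑ s, (Real.sqrt (p s) - Real.sqrt (q s))^2 := by
    exact Finset.sum_congr rfl fun s _ => sq_abs _
  have hg : ∑ s, (Real.sqrt (p s) + Real.sqrt (q s))^2 ≤ 4 := by
    have h1 : ∀ s, (Real.sqrt (p s) + Real.sqrt (q s))^2 ≤ 2 * p s + 2 * q s := by
      intro s
      nlinarith [Real.sq_sqrt (hp0 s), Real.sq_sqrt (hq0 s).le,
        sq_nonneg (Real.sqrt (p s) - Real.sqrt (q s))]
    calc ∑ s, (Real.sqrt (p s) + Real.sqrt (q s))^2 ≤ ∑ s, (2 * p s + 2 * q s) :=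
          Finset.sum_le_sum fun s _ => h1 s
      _ = 4 := by rw [Finset.sum_add_distrib, ← Finset.mul_sum, ← Finset.mul_sum, hp1, hq1]; norm_num
  have hfnn : 0 ≤ ∑ s, (Real.sqrt (p s) - Real.sqrt (q s))^2 :=
    Finset.sum_nonneg fun s _ => sq_nonneg _
  have hgnn : 0 ≤ ∑ s, (Real.sqrt (p s) + Real.sqrt (q s))^2 :=
    Finset.sum_nonneg fun s _ => sq_nonneg _
  have hKLnn : 0 ≤ ∑ s, p s * Real.log (p s / q s) := by linarith
  calc (∑ s, |p s - q s|)^2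
      = (∑ s, |Real.sqrt (p s) - Real.sqrt (q s)| * (Real.sqrt (p s) + Real.sqrt (q s)))^2 := by
        rw [hL1]
    _ ≤ (∑ s, |Real.sqrt (p s) - Real.sqrt (q s)|^2) * ∑ s, (Real.sqrt (p s) + Real.sqrt (q s))^2 :=
        hCS
    _ = (∑ s, (Real.sqrt (p s) - Real.sqrt (q s))^2) * ∑ s, (Real.sqrt (p s) + Real.sqrt (q s))^2 := by
        rw [hf]
    _ ≤ (∑ s, p s * Real.log (p s / q s)) * 4 := by
        apply mul_le_mul (by linarith) hg hgnn hKLnn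
    _ = 4 * ∑ s, p s * Real.log (p s / q s) := by ring

lemma aux_pow_stoch {n : Type*} [Fintype n] [DecidableEq n] (M : Matrix n n ℝ)
    (h0 : ∀ i j, 0 ≤ M i j) (h1 : ∀ i, ∑ j, M i j = 1) (t : ℕ) :
    (∀ i j, 0 ≤ (M^t) i j) ∧ (∀ i, ∑ j, (M^t) i j = 1) := by
  induction t with
  | zero =>
    constructor
    · intro i j; by_cases h : i = j <;> simp [Matrix.one_apply, h]
    · intro i; simp [Matrix.one_apply]
  | succ t ih =>
    rw [pow_succ]
    constructor
    · intro i j; rw [Matrix.mul_apply]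
      exact Finset.sum_nonneg fun k _ => mul_nonneg (ih.1 i k) (h0 k j)
    · intro i
      simp only [Matrix.mul_apply]
      rw [Finset.sum_comm]
      calc ∑ k, ∑ j, (M^t) i k * M k j = ∑ k, (M^t) i k * ∑ j, M k j := by
            simp [Finset.mul_sum]
        _ = 1 := by simp only [h1, mul_one]; exact ih.2 i

lemma aux_mulVec_bound {n : Type*} [Fintype n] (M : Matrix n n ℝ) (v : n → ℝ) (B : ℝ) (i : n)
    (h0 : ∀ j, 0 ≤ M i j) (h1 : ∑ j, M i j = 1) (hv : ∀ j, |v j| ≤ B) :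
    |M.mulVec v i| ≤ B := by
  have h : |∑ j, M i j * v j| ≤ ∑ j, M i j * B := by
    refine (Finset.abs_sum_le_sum_abs _ _).trans (Finset.sum_le_sum fun j _ => ?_)
    rw [abs_mul, abs_of_nonneg (h0 j)]
    exact mul_le_mul_of_nonneg_left (hv j) (h0 j)
  have e : ∑ j, M i j * B = B := by rw [← Finset.sum_mul, h1, one_mul]
  simpa [Matrix.mulVec, dotProduct, e] using h

lemma aux_pow_diff {n : Type*} [Fintype n] [DecidableEq n] [Nonempty n]
    (M N : Matrix n n ℝ)
    (hM0 : ∀ i j, 0 ≤ M i j) (hM1 : ∀ i, ∑ j, M i j = 1)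
    (hN0 : ∀ i j, 0 ≤ N i j) (hN1 : ∀ i, ∑ j, N i j = 1)
    (v : n → ℝ) (B δ : ℝ) (hB : ∀ j, |v j| ≤ B)
    (hδ : ∀ i, ∑ j, |M i j - N i j| ≤ δ) (t : ℕ) :
    ∀ i, |(M^t).mulVec v i - (N^t).mulVec v i| ≤ t * δ * B := by
  have hB0 : 0 ≤ B := le_trans (abs_nonneg _) (hB (Classical.arbitrary n))
  have hδ0 : 0 ≤ δ :=
    le_trans (Finset.sum_nonneg fun j _ => abs_nonneg _) (hδ (Classical.arbitrary n))
  induction t with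
  | zero => intro i; simp
  | succ t ih =>
    intro i
    have hMt := aux_pow_stoch M hM0 hM1 t
    have hNt := aux_pow_stoch N hN0 hN1 t
    have e1 : (M^(t+1)).mulVec v i = M.mulVec ((M^t).mulVec v) i := by
      rw [Matrix.mulVec_mulVec, ← pow_succ']
    have e2 : (N^(t+1)).mulVec v i = N.mulVec ((N^t).mulVec v) i := by
      rw [Matrix.mulVec_mulVec, ← pow_succ']
    have key : M.mulVec ((M^t).mulVec v) i - N.mulVec ((N^t).mulVec v) i
        = M.mulVec (fun j => (M^t).mulVec v j - (N^t).mulVec v j) i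
          + ∑ j, (M i j - N i j) * ((N^t).mulVec v j) := by
      simp only [Matrix.mulVec, dotProduct, mul_sub, sub_mul,
        Finset.sum_sub_distrib]
      ring
    have b1 : |M.mulVec (fun j => (M^t).mulVec v j - (N^t).mulVec v j) i| ≤ t * δ * B :=
      aux_mulVec_bound M _ _ i (hM0 i) (hM1 i) ih
    have b2 : |∑ j, (M i j - N i j) * ((N^t).mulVec v j)| ≤ δ * B := by
      have hNb : ∀ j, |(N^t).mulVec v j| ≤ B := fun j =>
        aux_mulVec_bound (N^t) v B j (hNt.1 j) (hNt.2 j) hB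
      calc |∑ j, (M i j - N i j) * ((N^t).mulVec v j)|
          ≤ ∑ j, |M i j - N i j| * B := by
            refine (Finset.abs_sum_le_sum_abs _ _).trans (Finset.sum_le_sum fun j _ => ?_)
            rw [abs_mul]
            exact mul_le_mul_of_nonneg_left (hNb j) (abs_nonneg _)
        _ = (∑ j, |M i j - N i j|) * B := by rw [Finset.sum_mul]
        _ ≤ δ * B := mul_le_mul_of_nonneg_right (hδ i) hB0
    calc |(M^(t+1)).mulVec v i - (N^(t+1)).mulVec v i|
        = |M.mulVec (fun j => (M^t).mulVec v j - (N^t).mulVec v j) i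
            + ∑ j, (M i j - N i j) * ((N^t).mulVec v j)| := by rw [e1, e2, key]
      _ ≤ t * δ * B + δ * B := le_trans (abs_add_le _ _) (add_le_add b1 b2)
      _ = (t+1 : ℕ) * δ * B := by push_cast; ring

set_option maxHeartbeats 1000000 in
/-- Finiteness of the characteristic time: the weighted KL divergence to the set
of fully supported confusing kernels is bounded away from `0`. -/
theorem stmt10 {S A : Type*} [Fintype S] [DecidableEq S] [Fintype A] [DecidableEq A]
    [Nonempty S] [Nonempty A]
    (γ : ℝ) (hγ : γ ∈ Set.Ioo (0 : ℝ) 1) (r : S → A → ℝ)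
    (π : S → A → ℝ) (hπ : IsPolicy π) (hπpos : ∀ s a, 0 < π s a)
    (ω : S × A → ℝ) (hω1 : ∑ sa : S × A, ω sa = 1) (hωpos : ∀ sa, 0 < ω sa)
    (ρ : S → ℝ) (hρ0 : ∀ s, 0 ≤ ρ s) (hρ1 : ∑ s : S, ρ s = 1)
    (p : S → A → S → ℝ) (hp : IsKernel p)
    (hV : ∑ s : S, ρ s * Vval γ π r p s ≠ 0) :
    ∃ ε > 0, ∀ q : S → A → S → ℝ, IsKernel q → (∀ s a s', 0 < q s a s') →
      (∑ s : S, ρ s * Vval γ π r q s) * (∑ s : S, ρ s * Vval γ π r p s) < 0 →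
      ε ≤ ∑ sa : S × A, ω sa * KLsa p q sa.1 sa.2 := by
  obtain ⟨hγ0, hγ1⟩ := hγ
  classical
  -- reward bound
  set B : ℝ := ∑ s, |rpi π r s| with hB
  have hBbound : ∀ s : S, |rpi π r s| ≤ B := fun s =>
    Finset.single_le_sum (f := fun s => |rpi π r s|) (fun j _ => abs_nonneg _) (Finset.mem_univ s)
  have hB0 : 0 ≤ B := Finset.sum_nonneg fun _ _ => abs_nonneg _
  -- summability constants
  have hsum_tγ : Summable (fun t : ℕ => (t:ℝ) * γ^t) := by
    simpa using summable_pow_mul_geometric_of_norm_lt_one 1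
      (by rw [Real.norm_eq_abs, abs_of_pos hγ0]; exact hγ1)
  set C0 : ℝ := ∑' t : ℕ, (t:ℝ)*γ^t with hC0
  have hC00 : 0 ≤ C0 := tsum_nonneg (fun t => by positivity)
  set CB := B * C0 with hCB
  have hCB0 : 0 ≤ CB := mul_nonneg hB0 hC00
  set v0 := |∑ s, ρ s * Vval γ π r p s| with hv0
  have hv00 : 0 < v0 := abs_pos.2 hV
  -- min weight
  set m := Finset.univ.inf' Finset.univ_nonempty ω with hm
  have hm0 : 0 < m := by
    obtain ⟨sa, -, h⟩ := Finset.exists_mem_eq_inf' Finset.univ_nonempty ω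
    rw [hm, h]; exact hωpos sa
  have hmle : ∀ sa, m ≤ ω sa := fun sa => Finset.inf'_le _ (Finset.mem_univ sa)
  refine ⟨m * v0^2 / (4 * (CB+1)^2), by positivity, ?_⟩
  intro q hq hqpos hconf
  by_contra hlt
  push_neg at hlt
  set K := ∑ sa : S × A, ω sa * KLsa p q sa.1 sa.2 with hK
  -- KL nonneg
  have hKLnn : ∀ s a, 0 ≤ KLsa p q s a := by
    intro s a
    have h := aux_pinsker (fun s' => p s a s') (fun s' => q s a s')
      (fun s' => hp.1 s a s') (hp.2 s a) (fun s' => hqpos s a s') (hq.2 s a)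
    have := sq_nonneg (∑ s', |p s a s' - q s a s'|)
    simp only [KLsa]
    linarith
  have hK0 : 0 ≤ K := Finset.sum_nonneg fun sa _ => mul_nonneg (hωpos sa).le (hKLnn sa.1 sa.2)
  -- per-(s,a) L1 bound
  set D := 2 * Real.sqrt (K/m) with hD
  have hD0 : 0 ≤ D := by positivity
  have hL1 : ∀ s a, ∑ s', |q s a s' - p s a s'| ≤ D := by
    intro s a
    have hKsa : KLsa p q s a ≤ K / m := by
      rw [le_div_iff₀ hm0]
      have h1 : ω (s,a) * KLsa p q s a ≤ K :=
        Finset.single_le_sum (f := fun sa : S × A => ω sa * KLsa p q sa.1 sa.2)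
          (fun sa _ => mul_nonneg (hωpos sa).le (hKLnn sa.1 sa.2)) (Finset.mem_univ (s,a))
      calc KLsa p q s a * m ≤ KLsa p q s a * ω (s,a) :=
            mul_le_mul_of_nonneg_left (hmle (s,a)) (hKLnn s a)
        _ ≤ K := by rw [mul_comm]; exact h1
    have hpk := aux_pinsker (fun s' => p s a s') (fun s' => q s a s')
      (fun s' => hp.1 s a s') (hp.2 s a) (fun s' => hqpos s a s') (hq.2 s a)
    have hnn : 0 ≤ ∑ s', |p s a s' - q s a s'| := Finset.sum_nonneg fun _ _ => abs_nonneg _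
    have hsym : ∑ s', |q s a s' - p s a s'| = ∑ s', |p s a s' - q s a s'| :=
      Finset.sum_congr rfl fun s' _ => abs_sub_comm _ _
    rw [hsym, hD]
    have h4 : (∑ s', |p s a s' - q s a s'|)^2 ≤ 4 * (K/m) := by
      refine hpk.trans ?_
      have : (∑ s' : S, p s a s' * Real.log (p s a s' / q s a s')) = KLsa p q s a := rfl
      rw [this]; linarith
    have := (Real.le_sqrt hnn (by positivity)).2 h4
    calc ∑ s', |p s a s' - q s a s'| ≤ Real.sqrt (4 * (K/m)) := this
      _ = 2 * Real.sqrt (K/m) := by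
        rw [show (4:ℝ) * (K/m) = 2^2 * (K/m) by norm_num, Real.sqrt_mul (by positivity),
          Real.sqrt_sq (by norm_num : (0:ℝ) ≤ 2)]
  -- Pmat stochasticity
  have hstoch : ∀ u : S → A → S → ℝ, IsKernel u →
      (∀ s s', 0 ≤ Pmat π u s s') ∧ (∀ s, ∑ s', Pmat π u s s' = 1) := by
    intro u hu
    constructor
    · intro s s'
      exact Finset.sum_nonneg fun a _ => mul_nonneg (hπ.1 s a) (hu.1 s a s')
    · intro s
      simp only [Pmat]
      rw [Finset.sum_comm]
      calc ∑ a, ∑ s', π s a * u s a s' = ∑ a, π s a * ∑ s', u s a s' := by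
            simp [Finset.mul_sum]
        _ = 1 := by simp only [hu.2, mul_one]; exact hπ.2 s
  obtain ⟨hP0, hP1⟩ := hstoch p hp
  obtain ⟨hQ0, hQ1⟩ := hstoch q hq
  -- row L1 bound for Pmat
  have hrow : ∀ s, ∑ s', |Pmat π q s s' - Pmat π p s s'| ≤ D := by
    intro s
    have step1 : ∀ s', |Pmat π q s s' - Pmat π p s s'| ≤ ∑ a, π s a * |q s a s' - p s a s'| := by
      intro s'
      simp only [Pmat]
      rw [← Finset.sum_sub_distrib]
      refine (Finset.abs_sum_le_sum_abs _ _).trans (le_of_eq (Finset.sum_congr rfl fun a _ => ?_))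
      rw [← mul_sub, abs_mul, abs_of_nonneg (hπ.1 s a)]
    calc ∑ s', |Pmat π q s s' - Pmat π p s s'|
        ≤ ∑ s', ∑ a, π s a * |q s a s' - p s a s'| := Finset.sum_le_sum fun s' _ => step1 s'
      _ = ∑ a, π s a * ∑ s', |q s a s' - p s a s'| := by
          rw [Finset.sum_comm]; simp [Finset.mul_sum]
      _ ≤ ∑ a, π s a * D := Finset.sum_le_sum fun a _ =>
          mul_le_mul_of_nonneg_left (hL1 s a) (hπ.1 s a)
      _ = D := by rw [← Finset.sum_mul, hπ.2 s, one_mul]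
  -- summability of the value series
  have hgeo : Summable (fun t : ℕ => B * γ^t) :=
    (summable_geometric_of_lt_one hγ0.le hγ1).mul_left B
  have hsummable : ∀ u : S → A → S → ℝ, IsKernel u → ∀ s : S,
      Summable (fun t : ℕ => γ^t * ((Pmat π u ^ t).mulVec (fun s' => rpi π r s')) s) := by
    intro u hu s
    obtain ⟨hU0, hU1⟩ := hstoch u hu
    refine Summable.of_norm_bounded hgeo fun t => ?_
    have hUt := aux_pow_stoch (Pmat π u) hU0 hU1 t
    rw [Real.norm_eq_abs, abs_mul, abs_pow, abs_of_pos hγ0]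
    calc γ^t * |((Pmat π u ^ t).mulVec (fun s' => rpi π r s')) s| ≤ γ^t * B :=
          mul_le_mul_of_nonneg_left
            (aux_mulVec_bound _ _ B s (hUt.1 s) (hUt.2 s) hBbound) (by positivity)
      _ = B * γ^t := mul_comm _ _
  -- per-state value difference bound
  have hVdiff : ∀ s, |Vval γ π r q s - Vval γ π r p s| ≤ CB * D := by
    intro s
    have hsq := hsummable q hq s
    have hsp := hsummable p hp s
    have hbnd : ∀ t : ℕ,
        ‖γ^t * ((Pmat π q ^ t).mulVec (fun s' => rpi π r s')) s
          - γ^t * ((Pmat π p ^ t).mulVec (fun s' => rpi π r s')) s‖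
        ≤ B * D * ((t:ℝ) * γ^t) := by
      intro t
      have hd := aux_pow_diff (Pmat π q) (Pmat π p) hQ0 hQ1 hP0 hP1
        (fun s' => rpi π r s') B D hBbound hrow t s
      rw [← mul_sub, Real.norm_eq_abs, abs_mul, abs_pow, abs_of_pos hγ0]
      calc γ^t * |((Pmat π q ^ t).mulVec (fun s' => rpi π r s')) s
            - ((Pmat π p ^ t).mulVec (fun s' => rpi π r s')) s|
          ≤ γ^t * ((t:ℝ) * D * B) := mul_le_mul_of_nonneg_left hd (by positivity)
        _ = B * D * ((t:ℝ) * γ^t) := by ring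
    have hsb : Summable (fun t : ℕ => B * D * ((t:ℝ) * γ^t)) := hsum_tγ.mul_left _
    have hsn : Summable (fun t : ℕ =>
        ‖γ^t * ((Pmat π q ^ t).mulVec (fun s' => rpi π r s')) s
          - γ^t * ((Pmat π p ^ t).mulVec (fun s' => rpi π r s')) s‖) :=
      Summable.of_nonneg_of_le (fun t => norm_nonneg _) hbnd hsb
    calc |Vval γ π r q s - Vval γ π r p s|
        = ‖∑' t : ℕ, (γ^t * ((Pmat π q ^ t).mulVec (fun s' => rpi π r s')) s
            - γ^t * ((Pmat π p ^ t).mulVec (fun s' => rpi π r s')) s)‖ := by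
          rw [Summable.tsum_sub hsq hsp]; rfl
      _ ≤ ∑' t : ℕ, ‖γ^t * ((Pmat π q ^ t).mulVec (fun s' => rpi π r s')) s
            - γ^t * ((Pmat π p ^ t).mulVec (fun s' => rpi π r s')) s‖ :=
          norm_tsum_le_tsum_norm hsn
      _ ≤ ∑' t : ℕ, B * D * ((t:ℝ) * γ^t) := Summable.tsum_le_tsum hbnd hsn hsb
      _ = B * D * C0 := by rw [tsum_mul_left]
      _ = CB * D := by rw [hCB]; ring
  -- aggregate over ρ
  have hagg : |(∑ s, ρ s * Vval γ π r q s) - ∑ s, ρ s * Vval γ π r p s| ≤ CB * D := by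
    rw [← Finset.sum_sub_distrib]
    calc |∑ s, (ρ s * Vval γ π r q s - ρ s * Vval γ π r p s)|
        ≤ ∑ s, ρ s * |Vval γ π r q s - Vval γ π r p s| := by
          refine (Finset.abs_sum_le_sum_abs _ _).trans
            (le_of_eq (Finset.sum_congr rfl fun s _ => ?_))
          rw [← mul_sub, abs_mul, abs_of_nonneg (hρ0 s)]
      _ ≤ ∑ s, ρ s * (CB * D) := Finset.sum_le_sum fun s _ =>
          mul_le_mul_of_nonneg_left (hVdiff s) (hρ0 s)
      _ = CB * D := by rw [← Finset.sum_mul, hρ1, one_mul]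
  -- derive the contradiction
  have hKm : K/m < m * v0^2 / (4*(CB+1)^2) / m := by
    apply div_lt_div_of_pos_right hlt hm0
  have heq : m * v0^2 / (4*(CB+1)^2) / m = (v0/(2*(CB+1)))^2 := by
    field_simp
    ring
  have hsq : Real.sqrt (K/m) < v0/(2*(CB+1)) := by
    have h1 : Real.sqrt (K/m) < Real.sqrt ((v0/(2*(CB+1)))^2) :=
      Real.sqrt_lt_sqrt (by positivity) (by rw [← heq]; exact hKm)
    rwa [Real.sqrt_sq (by positivity)] at h1
  have hclose : |(∑ s, ρ s * Vval γ π r q s) - ∑ s, ρ s * Vval γ π r p s| < v0 := by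
    have h1 : CB * D ≤ (CB+1) * D := by nlinarith
    have h2 : (CB+1) * D < v0 := by
      have h3 : D < v0/(CB+1) := by
        rw [hD]
        calc 2 * Real.sqrt (K/m) < 2 * (v0/(2*(CB+1))) := by linarith
          _ = v0/(CB+1) := by field_simp
      calc (CB+1)*D < (CB+1)*(v0/(CB+1)) := mul_lt_mul_of_pos_left h3 (by positivity)
        _ = v0 := by field_simp
    linarith [hagg]
  set x := ∑ s, ρ s * Vval γ π r q s with hx
  set y := ∑ s, ρ s * Vval γ π r p s with hy
  rw [hv0] at hclose
  nlinarith [sq_abs (x - y), sq_abs y, abs_nonneg (x - y), abs_nonneg y, hclose, hconf,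
    sq_nonneg x]
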